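/- Let X = {0,1}^ℕ with the ultrametric d(x,y) = 2^{−i} where i is the least index with x^i ≠ y^i. Fix k, let ℓ be the least integer with 2^ℓ ≥ k, and let w_1,…,w_k be distinct words in {0,1}^ℓ. Define g : X^k → W_p(X) by g(x_1,…,x_k) = Σ_i (1/k)·δ_{w_i x_i}, where w x denotes prepending w to x. Then g is a homothetic embedding: W_p(g(x̄), g(ȳ)) = (1/(k^{1/p}·2^ℓ))·d_p(x̄, ȳ). -/

import Mathlib

open MeasureTheory ENNReal

/-- `π` is a coupling of `μ` and `ν`. -/
def IsCoupling {X : Type*} [MeasurableSpace X] (μ ν : Measure X)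
    (π : Measure (X × X)) : Prop :=
  π.map Prod.fst = μ ∧ π.map Prod.snd = ν

/-- The `L^p` Wasserstein distance between two measures, as the infimal `p`-cost
over all couplings, to the power `1/p`. -/
noncomputable def Wp {X : Type*} [MetricSpace X] [MeasurableSpace X]
    (p : ℝ) (μ ν : Measure X) : ℝ≥0∞ :=
  (⨅ (π : Measure (X × X)) (_ : IsCoupling μ ν π),
    ∫⁻ z, ENNReal.ofReal (dist z.1 z.2 ^ p) ∂π) ^ (1 / p)

/-- The space `{0,1}^ℕ` with the ultrametric `d(x,y) = (1/2)^i`, where `i` is the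
first index at which `x` and `y` differ. -/
noncomputable local instance : MetricSpace (ℕ → Bool) :=
  PiNat.metricSpace (E := fun _ => Bool)

noncomputable local instance : MeasurableSpace (ℕ → Bool) := borel _

/-- Prepending a word `w ∈ {0,1}^ℓ` to a sequence `x ∈ {0,1}^ℕ`. -/
def prepend {ℓ : ℕ} (w : Fin ℓ → Bool) (x : ℕ → Bool) : ℕ → Bool := fun n =>
  if h : n < ℓ then w ⟨n, h⟩ else x (n - ℓ)

/- ### auxiliary facts -/

local instance : BorelSpace (ℕ → Bool) := ⟨rfl⟩

local instance : SecondCountableTopology (ℕ → Bool) :=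
  inferInstanceAs (@SecondCountableTopology (ℕ → Bool) Pi.topologicalSpace)

local instance : MeasurableSingletonClass (ℕ → Bool) :=
  ⟨fun _ => isClosed_singleton.measurableSet⟩

private lemma map_fsum {α β : Type*} [MeasurableSpace α] [MeasurableSpace β]
    {ι : Type*} (s : Finset ι) (μ : ι → Measure α) {f : α → β} (hf : Measurable f) :
    (∑ i ∈ s, μ i).map f = ∑ i ∈ s, (μ i).map f := by
  classical
  induction s using Finset.induction_on with
  | empty => simp
  | insert _ _ h ih => rw [Finset.sum_insert h, Finset.sum_insert h, Measure.map_add _ _ hf, ih]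

private lemma firstDiff_eq {x y : ℕ → Bool} {m : ℕ} (h1 : ∀ n < m, x n = y n)
    (h2 : x m ≠ y m) : PiNat.firstDiff x y = m := by
  have hne : x ≠ y := fun h => h2 (congrFun h m)
  refine le_antisymm ?_ ?_
  · by_contra hlt
    exact h2 (PiNat.apply_eq_of_lt_firstDiff (lt_of_not_ge hlt))
  · by_contra hlt
    exact PiNat.apply_firstDiff_ne hne (h1 _ (lt_of_not_ge hlt))

private lemma dist_le_one (x y : ℕ → Bool) : dist x y ≤ 1 := by
  rcases eq_or_ne x y with rfl | h
  · simp
  · rw [PiNat.dist_eq_of_ne h]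
    exact pow_le_one₀ (by norm_num) (by norm_num)

private lemma prepend_inj {ℓ : ℕ} (w : Fin ℓ → Bool) {x y : ℕ → Bool}
    (h : prepend w x = prepend w y) : x = y := by
  funext n
  have := congrFun h (ℓ + n)
  simpa [prepend] using this

private lemma dist_prepend {ℓ : ℕ} (w : Fin ℓ → Bool) (x y : ℕ → Bool) :
    dist (prepend w x) (prepend w y) = (1/2 : ℝ) ^ ℓ * dist x y := by
  rcases eq_or_ne x y with rfl | h
  · simp [dist_self]
  · have hne : prepend w x ≠ prepend w y := fun hc => h (prepend_inj w hc)
    rw [PiNat.dist_eq_of_ne hne, PiNat.dist_eq_of_ne h]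
    have : PiNat.firstDiff (prepend w x) (prepend w y) = ℓ + PiNat.firstDiff x y := by
      apply firstDiff_eq
      · intro n hn
        by_cases hnℓ : n < ℓ
        · simp [prepend, hnℓ]
        · have : n - ℓ < PiNat.firstDiff x y := by omega
          simp only [prepend, dif_neg hnℓ]
          exact PiNat.apply_eq_of_lt_firstDiff this
      · have : ¬ (ℓ + PiNat.firstDiff x y < ℓ) := by omega
        simp only [prepend, dif_neg this, Nat.add_sub_cancel_left]
        exact PiNat.apply_firstDiff_ne h
    rw [this, pow_add]

private lemma le_dist_prepend {ℓ : ℕ} {v w : Fin ℓ → Bool} (hvw : v ≠ w) (x y : ℕ → Bool) :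
    (1/2 : ℝ) ^ ℓ ≤ dist (prepend v x) (prepend w y) := by
  obtain ⟨m, hm⟩ := Function.ne_iff.mp hvw
  have hne : prepend v x ≠ prepend w y := by
    intro hc
    apply hm
    have := congrFun hc m.1
    simpa [prepend, m.2] using this
  rw [PiNat.dist_eq_of_ne hne]
  apply pow_le_pow_of_le_one (by norm_num) (by norm_num)
  by_contra hlt
  apply hm
  have := PiNat.apply_eq_of_lt_firstDiff (show (m.1 : ℕ) < PiNat.firstDiff (prepend v x) (prepend w y) by omega)
  simpa [prepend, m.2] using this

/-- for `X = {0,1}^ℕ` with the ultrametric, prefixing by `k`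
distinct words of length `ℓ` (where `ℓ` is the least integer with `2^ℓ ≥ k`)
yields a homothetic embedding `g : X^k → W_p(X)` with
`W_p(g x̄, g ȳ) = (1/(k^{1/p}·2^ℓ))·d_p(x̄, ȳ)`. -/
theorem stmt10 (p : ℝ) (hp : 1 ≤ p) (k ℓ : ℕ) (hk : 0 < k)
    (hℓ : k ≤ 2 ^ ℓ) (hmin : ∀ j : ℕ, k ≤ 2 ^ j → ℓ ≤ j)
    (w : Fin k → (Fin ℓ → Bool)) (hw : Function.Injective w)
    (g : (Fin k → (ℕ → Bool)) → Measure (ℕ → Bool))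
    (hg : ∀ x, g x = ∑ i : Fin k, ((k : ℝ≥0∞))⁻¹ • Measure.dirac (prepend (w i) (x i)))
    (x y : Fin k → (ℕ → Bool)) :
    Wp p (g x) (g y) =
      ENNReal.ofReal
        ((1 / ((k:ℝ) ^ (1 / p) * (2:ℝ) ^ ℓ)) *
          (∑ i : Fin k, dist (x i) (y i) ^ p) ^ (1 / p)) := by
  have hp0 : (0:ℝ) < p := lt_of_lt_of_le one_pos hp
  set a : Fin k → (ℕ → Bool) := fun i => prepend (w i) (x i) with ha
  set b : Fin k → (ℕ → Bool) := fun i => prepend (w i) (y i) with hb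
  have hainj : Function.Injective a := by
    intro i j hij
    apply hw
    funext m
    have := congrFun hij m.1
    simpa [ha, prepend, m.2] using this
  have hcost : Measurable (fun z : (ℕ → Bool) × (ℕ → Bool) =>
      ENNReal.ofReal (dist z.1 z.2 ^ p)) := by
    have : (fun z : (ℕ → Bool) × (ℕ → Bool) => ENNReal.ofReal (dist z.1 z.2 ^ p)) =
        fun z => ENNReal.ofReal (dist z.1 z.2) ^ p := by
      funext z
      exact (ENNReal.ofReal_rpow_of_nonneg dist_nonneg hp0.le).symm
    rw [this]
    exact ((measurable_dist).ennreal_ofReal).pow_const p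
  set I : ℝ≥0∞ := ∑ i : Fin k, (k : ℝ≥0∞)⁻¹ * ENNReal.ofReal (dist (a i) (b i) ^ p) with hI
  have hinf : (⨅ (π : Measure ((ℕ → Bool) × (ℕ → Bool)))
      (_ : IsCoupling (g x) (g y) π),
      ∫⁻ z, ENNReal.ofReal (dist z.1 z.2 ^ p) ∂π) = I := by
    apply le_antisymm
    · -- upper bound via the diagonal coupling
      set π₀ : Measure ((ℕ → Bool) × (ℕ → Bool)) :=
        ∑ i : Fin k, (k : ℝ≥0∞)⁻¹ • Measure.dirac (a i, b i) with hπ₀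
      have hcoup : IsCoupling (g x) (g y) π₀ := by
        constructor
        · rw [hπ₀, map_fsum _ _ measurable_fst, hg]
          congr 1
          funext i
          rw [Measure.map_smul, Measure.map_dirac' measurable_fst]
        · rw [hπ₀, map_fsum _ _ measurable_snd, hg]
          congr 1
          funext i
          rw [Measure.map_smul, Measure.map_dirac' measurable_snd]
      refine le_trans (iInf₂_le π₀ hcoup) (le_of_eq ?_)
      rw [hπ₀, lintegral_finset_sum_measure, hI]
      congr 1
      funext i
      rw [lintegral_smul_measure, lintegral_dirac' _ hcost, smul_eq_mul]
    · -- lower bound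
      refine le_iInf₂ fun π hπ => ?_
      set F : (ℕ → Bool) → ℝ≥0∞ := fun u =>
        ∑ i : Fin k, ({a i} : Set (ℕ → Bool)).indicator
          (fun _ => ENNReal.ofReal (dist (a i) (b i) ^ p)) u with hF
      have hFmeas : Measurable F := by
        apply Finset.measurable_sum
        intro i _
        exact measurable_const.indicator (measurableSet_singleton _)
      have hFa : ∀ j, F (a j) = ENNReal.ofReal (dist (a j) (b j) ^ p) := by
        intro j
        simp only [hF]
        rw [Finset.sum_eq_single_of_mem j (Finset.mem_univ j)]
        · simp
        · intro i _ hij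
          apply Set.indicator_of_notMem
          simp only [Set.mem_singleton_iff]
          exact fun hc => hij (hainj hc.symm)
      have hS : ∀ᵐ z : (ℕ → Bool) × (ℕ → Bool) ∂π, z.1 ∈ Set.range a := by
        rw [ae_iff]
        have he : {z : (ℕ → Bool) × (ℕ → Bool) | ¬ z.1 ∈ Set.range a} =
            Prod.fst ⁻¹' (Set.range a)ᶜ := rfl
        rw [he, ← Measure.map_apply measurable_fst (Set.finite_range a).measurableSet.compl,
          hπ.1, hg]
        simp only [Measure.coe_finset_sum, Finset.sum_apply, Measure.smul_apply, smul_eq_mul]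
        apply Finset.sum_eq_zero
        intro i _
        rw [Measure.dirac_apply' _ (Set.finite_range a).measurableSet.compl]
        simp [Set.indicator, Set.mem_range]
        exact ⟨i, rfl⟩
      have hT : ∀ᵐ z : (ℕ → Bool) × (ℕ → Bool) ∂π, z.2 ∈ Set.range b := by
        rw [ae_iff]
        have he : {z : (ℕ → Bool) × (ℕ → Bool) | ¬ z.2 ∈ Set.range b} =
            Prod.snd ⁻¹' (Set.range b)ᶜ := rfl
        rw [he, ← Measure.map_apply measurable_snd (Set.finite_range b).measurableSet.compl,
          hπ.2, hg]
        simp only [Measure.coe_finset_sum, Finset.sum_apply, Measure.smul_apply, smul_eq_mul]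
        apply Finset.sum_eq_zero
        intro i _
        rw [Measure.dirac_apply' _ (Set.finite_range b).measurableSet.compl]
        simp [Set.indicator, Set.mem_range]
        exact ⟨i, rfl⟩
      have hle : ∀ᵐ z : (ℕ → Bool) × (ℕ → Bool) ∂π,
          F z.1 ≤ ENNReal.ofReal (dist z.1 z.2 ^ p) := by
        filter_upwards [hS, hT] with z hz1 hz2
        obtain ⟨i, hi⟩ := hz1
        obtain ⟨j, hj⟩ := hz2
        rw [← hi, ← hj, hFa i]
        apply ENNReal.ofReal_le_ofReal
        apply Real.rpow_le_rpow dist_nonneg _ hp0.le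
        rcases eq_or_ne i j with rfl | hij
        · exact le_refl _
        · have h1 : dist (a i) (b i) ≤ (1/2:ℝ) ^ ℓ := by
            rw [ha, hb]
            simp only []
            rw [dist_prepend]
            calc (1/2:ℝ) ^ ℓ * dist (x i) (y i) ≤ (1/2:ℝ) ^ ℓ * 1 :=
                  mul_le_mul_of_nonneg_left (dist_le_one _ _) (by positivity)
              _ = (1/2:ℝ) ^ ℓ := mul_one _
          exact h1.trans (le_dist_prepend (fun hc => hij (hw hc)) _ _)
      calc I = ∫⁻ u, F u ∂(g x) := by
            rw [hg, lintegral_finset_sum_measure, hI]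
            congr 1
            funext i
            rw [lintegral_smul_measure, lintegral_dirac' _ hFmeas, hFa i, smul_eq_mul]
        _ = ∫⁻ z, F z.1 ∂π := by
            rw [← hπ.1, lintegral_map hFmeas measurable_fst]
        _ ≤ ∫⁻ z, ENNReal.ofReal (dist z.1 z.2 ^ p) ∂π := lintegral_mono_ae hle
  -- arithmetic
  rw [Wp, hinf]
  set SS : ℝ := ∑ i : Fin k, dist (x i) (y i) ^ p with hSS
  have hSS0 : 0 ≤ SS := Finset.sum_nonneg fun i _ => Real.rpow_nonneg dist_nonneg p
  have hk0 : (0:ℝ) < k := Nat.cast_pos.mpr hk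
  have hIeq : I = ENNReal.ofReal ((k:ℝ)⁻¹ * ((1/2:ℝ)^ℓ)^p * SS) := by
    have h1 : ∀ i : Fin k, ENNReal.ofReal (dist (a i) (b i) ^ p)
        = ENNReal.ofReal (((1/2:ℝ)^ℓ)^p * dist (x i) (y i) ^ p) := by
      intro i
      rw [ha, hb]
      simp only []
      rw [dist_prepend, Real.mul_rpow (by positivity) dist_nonneg]
    have h2 : (k : ℝ≥0∞)⁻¹ = ENNReal.ofReal ((k:ℝ)⁻¹) := by
      rw [ENNReal.ofReal_inv_of_pos hk0, ENNReal.ofReal_natCast]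
    rw [hI]
    simp_rw [h1, h2, ← ENNReal.ofReal_mul (by positivity : (0:ℝ) ≤ (k:ℝ)⁻¹)]
    rw [← ENNReal.ofReal_sum_of_nonneg (fun i _ => by positivity)]
    congr 1
    rw [hSS, Finset.mul_sum]
    congr 1
    funext i
    ring
  rw [hIeq, ENNReal.ofReal_rpow_of_nonneg (by positivity) (by positivity)]
  congr 1
  have hkp : (0:ℝ) < (k:ℝ) ^ (1/p) := Real.rpow_pos_of_pos hk0 _
  have hc0 : (0:ℝ) ≤ (1/2:ℝ) ^ ℓ := by positivity
  rw [Real.mul_rpow (by positivity) hSS0, Real.mul_rpow (by positivity) (by positivity),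
    Real.inv_rpow hk0.le, ← Real.rpow_mul hc0, mul_one_div, div_self hp0.ne', Real.rpow_one]
  have h2ℓ : (1/2:ℝ) ^ ℓ = ((2:ℝ)^ℓ)⁻¹ := by rw [one_div, inv_pow]
  rw [h2ℓ]
  field_simp
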